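/- Let α ∈ ℝ, β ∈ ℝ, σ ∈ ℝ with σ ≠ 0, and let I ⊆ (0,∞) be a nonempty open interval such that 1 + ασq > 0 for all q ∈ I. Suppose v : ℝ → ℝ is differentiable on I, v(q) > 0 for all q ∈ I, and (ασq+1)·q·v′(q) + (αq+β)·v(q) = 0 for all q ∈ I. Then there exists K > 0 such that v(q) = K·(1+ασq)^{β−1/σ}·q^{−β} for all q ∈ I. (This is the 'only if' direction of the characterization of LFRRA marginal utilities.) -/

import Mathlib

/-- ('only if' direction) A positive solution of the LFRRA
first-order ODE on an open interval `I ⊆ (0,∞)` must be of the form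
`v(q) = K·(1+ασq)^(β−1/σ)·q^(−β)` for some `K > 0`. -/
theorem lfrra_ode_solution_unique
    (α β σ : ℝ) (hσ : σ ≠ 0)
    (I : Set ℝ) (hIopen : IsOpen I) (hIne : I.Nonempty) (hIconn : I.OrdConnected)
    (hIsub : I ⊆ Set.Ioi (0:ℝ))
    (hbase : ∀ q ∈ I, 0 < 1 + α * σ * q)
    (v v' : ℝ → ℝ)
    (hderiv : ∀ q ∈ I, HasDerivAt v (v' q) q)
    (hvpos : ∀ q ∈ I, 0 < v q)
    (hode : ∀ q ∈ I, (α * σ * q + 1) * q * v' q + (α * q + β) * v q = 0) :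
    ∃ K : ℝ, 0 < K ∧ ∀ q ∈ I, v q = K * (1 + α * σ * q) ^ (β - 1/σ) * q ^ (-β) := by
  set h : ℝ → ℝ := fun q =>
    Real.log (v q) - (β - 1/σ) * Real.log (1 + α * σ * q) + β * Real.log q with hh
  have hderivh : ∀ q ∈ I, HasDerivAt h 0 q := by
    intro q hq
    have hq0 : (0:ℝ) < q := hIsub hq
    have hv0 : 0 < v q := hvpos q hq
    have hB : 0 < 1 + α * σ * q := hbase q hq
    have d1 : HasDerivAt (fun q => Real.log (v q)) (v' q / v q) q :=
      (hderiv q hq).log (ne_of_gt hv0)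
    have d2 : HasDerivAt (fun q : ℝ => 1 + α * σ * q) (α * σ) q := by
      simpa using ((hasDerivAt_id q).const_mul (α * σ)).const_add 1
    have d3 : HasDerivAt (fun q : ℝ => Real.log (1 + α * σ * q)) (α * σ / (1 + α * σ * q)) q :=
      d2.log (ne_of_gt hB)
    have d4 : HasDerivAt (fun q : ℝ => Real.log q) (1 / q) q := by
      simpa [one_div] using Real.hasDerivAt_log (ne_of_gt hq0)
    have D : HasDerivAt h
        (v' q / v q - (β - 1/σ) * (α * σ / (1 + α * σ * q)) + β * (1 / q)) q :=
      (d1.sub (d3.const_mul (β - 1/σ))).add (d4.const_mul β)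
    have hodeq := hode q hq
    have hzero : v' q / v q - (β - 1/σ) * (α * σ / (1 + α * σ * q)) + β * (1 / q) = 0 := by
      have hvne : v q ≠ 0 := ne_of_gt hv0
      have hqne : q ≠ 0 := ne_of_gt hq0
      have hBne : (1 + α * σ * q) ≠ 0 := ne_of_gt hB
      have hBne' : (1 + σ * α * q) ≠ 0 := by rwa [mul_comm σ α]
      field_simp
      linear_combination hodeq
    rwa [hzero] at D
  obtain ⟨q₀, hq₀⟩ := hIne
  have hconst : ∀ q ∈ I, h q = h q₀ := by
    intro q hq
    have hconv : Convex ℝ I := hIconn.convex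
    refine hconv.is_const_of_fderivWithin_eq_zero (𝕜 := ℝ) (fun x hx => ?_) (fun x hx => ?_) hq hq₀
    · exact ((hderivh x hx).differentiableAt).differentiableWithinAt
    · rw [fderivWithin_of_isOpen hIopen hx, (hderivh x hx).hasFDerivAt.fderiv]
      exact ContinuousLinearMap.ext fun y => by simp
  refine ⟨Real.exp (h q₀), Real.exp_pos _, fun q hq => ?_⟩
  have hq0 : (0:ℝ) < q := hIsub hq
  have hv0 : 0 < v q := hvpos q hq
  have hB : 0 < 1 + α * σ * q := hbase q hq
  have key : h q + Real.log (1 + α * σ * q) * (β - 1/σ) + Real.log q * (-β)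
      = Real.log (v q) := by
    simp only [hh]; ring
  calc v q = Real.exp (Real.log (v q)) := (Real.exp_log hv0).symm
    _ = Real.exp (h q) * Real.exp (Real.log (1 + α * σ * q) * (β - 1/σ)) *
        Real.exp (Real.log q * (-β)) := by
        rw [← Real.exp_add, ← Real.exp_add, key]
    _ = Real.exp (h q₀) * (1 + α * σ * q) ^ (β - 1/σ) * q ^ (-β) := by
        rw [hconst q hq, Real.rpow_def_of_pos hB, Real.rpow_def_of_pos hq0]
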